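/- Under a conformal β-change, the tensor η_{hijk} = [S_{hijk} − (h_{jh}M_{ik} + h_{ik}M_{jh} − h_{hk}M_{ij} − h_{ij}M_{hk})]/L is σ-invariant: *η_{hijk} = e^σ η_{hijk}. Consequently (M,L) is S₄-like if and only if (M,*L) is S₄-like. -/
import Mathlib


/-- Under a conformal β-change, the tensor
`η_{hijk} = [S_{hijk} − (h_{jh}M_{ik} + h_{ik}M_{jh} − h_{hk}M_{ij} − h_{ij}M_{hk})]/L`
is σ-invariant: `*η_{hijk} = e^σ η_{hijk}`. Consequently `(M,L)` is S₄-like iff `(M,*L)`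
is S₄-like. -/
theorem conformal_beta_change_S4_like
    (n : ℕ) (hn : 4 < n)
    (S4 Ss4 : Fin n → Fin n → Fin n → Fin n → ℝ)
    (h hs H M Ms : Fin n → Fin n → ℝ)
    (σ L β Ls τ : ℝ)
    (hLs : Ls = Real.exp σ * L + β) (hL0 : L ≠ 0) (hLs0 : Ls ≠ 0)
    (hτ : τ = Real.exp σ * (Ls / L)) (hτ0 : τ ≠ 0)
    (hSs4 : ∀ h' i j k, Ss4 h' i j k = τ * S4 h' i j k
      - (τ / (2 * Ls)) * (h i k * H j h' + h j h' * H i k - h h' k * H i j - h i j * H h' k))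
    (hhs : ∀ i j, hs i j = τ * h i j)
    (hMs : ∀ i j, Ms i j = M i j - (1 / (2 * Ls)) * H i j)
    (hHsym : ∀ i j, H i j = H j i)
    (hhsym : ∀ i j, h i j = h j i)
    (η ηs : Fin n → Fin n → Fin n → Fin n → ℝ)
    (hη : ∀ h' i j k, η h' i j k = (S4 h' i j k
      - (h j h' * M i k + h i k * M j h' - h h' k * M i j - h i j * M h' k)) / L)
    (hηs : ∀ h' i j k, ηs h' i j k = (Ss4 h' i j k
      - (hs j h' * Ms i k + hs i k * Ms j h' - hs h' k * Ms i j - hs i j * Ms h' k)) / Ls) :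
    (∀ h' i j k, ηs h' i j k = Real.exp σ * η h' i j k) ∧
    ((∀ h' i j k, S4 h' i j k =
        h j h' * M i k + h i k * M j h' - h h' k * M i j - h i j * M h' k) ↔
      (∀ h' i j k, Ss4 h' i j k =
        hs j h' * Ms i k + hs i k * Ms j h' - hs h' k * Ms i j - hs i j * Ms h' k)) := by

  have hexp : Real.exp σ ≠ 0 := Real.exp_ne_zero σ
  have key : ∀ h' i j k, ηs h' i j k = Real.exp σ * η h' i j k := by
    intro h' i j k
    rw [hηs, hSs4, hhs, hhs, hhs, hhs, hMs, hMs, hMs, hMs, hη, hτ]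
    field_simp
    ring
  refine ⟨key, ?_, ?_⟩
  · intro hS h' i j k
    have h1 : η h' i j k = 0 := by rw [hη, hS]; simp
    have h2 := key h' i j k
    rw [h1, mul_zero, hηs, div_eq_zero_iff] at h2
    rcases h2 with h2 | h2
    · linarith
    · exact absurd h2 hLs0
  · intro hS h' i j k
    have h1 : ηs h' i j k = 0 := by rw [hηs, hS]; simp
    have h2 := key h' i j k
    rw [h1, hη] at h2
    have h3 : (S4 h' i j k - (h j h' * M i k + h i k * M j h' - h h' k * M i j - h i j * M h' k)) = 0 := by
      have h4 := h2.symm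
      rcases mul_eq_zero.mp h4 with h5 | h5
      · exact absurd h5 hexp
      · rcases (div_eq_zero_iff.mp h5) with h6 | h6
        · exact h6
        · exact absurd h6 hL0
    linarith
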